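/- Let F₂ be the free group on generators g and h, and let p ≥ 3. Suppose A = {v₁gᵖv₁', ..., v_{n₁}gᵖv_{n₁}'} and B = {u₁hᵖu₁', ..., u_{n₂}hᵖu_{n₂}'} are sets of reduced words in F₂ such that each vᵢ, vᵢ', uᵢ, uᵢ' is an alternating word in g^{±1} and h^{±1} (each letter has exponent ±1, consecutive letters alternate between the g-letter and the h-letter), each vᵢ ends with h^{±1}, each vᵢ' begins with h^{±1}, each uᵢ ends with g^{±1}, each uᵢ' begins with g^{±1}, and L(v_{i+1}) > L(vᵢ), L(v_{i+1}') > L(vᵢ'), L(u_{i+1}) > L(uᵢ), L(u_{i+1}') > L(uᵢ') for all applicable i. Then any nonempty reduced word in the elements of A ∪ B and their inverses is not equal to the identity of F₂. -/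

import Mathlib

/-!
Statement 1 (word lemma 2, Lemma 3.2 of the paper).

`F₂` is the free group on generators `g = of 0`, `h = of 1`.
"Alternating word in `g^{±1}` and `h^{±1}`" means that in the reduced word consecutive
letters alternate between the `g`-letter and the `h`-letter (each letter has exponent ±1
automatically, since same-generator neighbours are forbidden); such a word may be empty
(matching `v₁ = u₁ = e` in the paper).
The conclusion "every nonempty reduced word in `A ∪ B` and inverses is ≠ e" is expressed
via the lift from the free group on `Fin n₁ ⊕ Fin n₂`.
-/

namespace Stmt1

abbrev F2 := FreeGroup (Fin 2)

def g : F2 := FreeGroup.of 0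
def h : F2 := FreeGroup.of 1

/-- a reduced word whose letters strictly alternate between `g^{±1}` and `h^{±1}`. -/
def Alternating (w : F2) : Prop :=
  List.Chain' (fun a b : Fin 2 × Bool => a.1 ≠ b.1) w.toWord

def EndsWith (x : Fin 2) (w : F2) : Prop :=
  w.toWord = [] ∨ w.toWord.getLast?.map Prod.fst = some x

def StartsWith (x : Fin 2) (w : F2) : Prop :=
  w.toWord = [] ∨ w.toWord.head?.map Prod.fst = some x

section Generic
variable {α : Type*} [DecidableEq α]

open FreeGroup List

variable {α : Type*} [DecidableEq α]

def Red' (L : List (α × Bool)) : Prop :=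
  List.Chain' (fun a b : α × Bool => ¬(b.1 = a.1 ∧ b.2 = !a.2)) L

theorem red'_tail {x : α × Bool} {L : List (α × Bool)} (h : Red' (x :: L)) : Red' L :=
  h.tail

theorem reduce_eq_self {L : List (α × Bool)} (h : Red' L) : FreeGroup.reduce L = L := by
  induction L with
  | nil => rfl
  | cons x L ih =>
    have hL : FreeGroup.reduce L = L := ih h.tail
    rw [FreeGroup.reduce.cons, hL]
    cases L with
    | nil => rfl
    | cons y t =>
      have : ¬(y.1 = x.1 ∧ y.2 = !x.2) := List.isChain_cons_cons.1 h |>.1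
      simp only []
      rw [if_neg]
      intro ⟨h1, h2⟩
      exact this ⟨h1.symm, by rw [h2]; simp⟩

theorem red'_reduce (L : List (α × Bool)) : Red' (FreeGroup.reduce L) := by
  induction L with
  | nil => exact List.isChain_nil
  | cons x L ih =>
    rw [FreeGroup.reduce.cons]
    cases hL : FreeGroup.reduce L with
    | nil => exact List.isChain_singleton _
    | cons y t =>
      rw [hL] at ih
      by_cases hc : x.1 = y.1 ∧ x.2 = !y.2
      · simp only [if_pos hc]
        exact ih.tail
      · simp only [if_neg hc]
        refine List.isChain_cons_cons.2 ⟨?_, ih⟩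
        intro ⟨h1, h2⟩
        exact hc ⟨h1.symm, by rw [h2]; simp⟩

theorem red'_toWord (x : FreeGroup α) : Red' x.toWord := by
  rw [← FreeGroup.reduce_toWord]; exact red'_reduce _

theorem invRev_cons (x : α × Bool) (L : List (α × Bool)) :
    FreeGroup.invRev (x :: L) = FreeGroup.invRev L ++ [(x.1, !x.2)] := by
  simp [FreeGroup.invRev]

theorem cancel : ∀ {L W : List (α × Bool)}, Red' L → Red' W →
    ∃ L₁ M W₂, L = L₁ ++ M ∧ W = FreeGroup.invRev M ++ W₂ ∧
      FreeGroup.reduce (L ++ W) = L₁ ++ W₂ := by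
  intro L
  induction L with
  | nil =>
    intro W _ hW
    exact ⟨[], [], W, rfl, by simp [FreeGroup.invRev], by simpa using reduce_eq_self hW⟩
  | cons x L ih =>
    intro W hL hW
    obtain ⟨L₁, M, W₂, hsplit, hWsplit, hred⟩ := ih hL.tail hW
    cases L₁ with
    | cons z t =>
      refine ⟨x :: z :: t, M, W₂, by rw [hsplit]; rfl, hWsplit, ?_⟩
      rw [List.cons_append, FreeGroup.reduce.cons, hred]
      simp only [List.cons_append]
      rw [if_neg]
      have := (List.isChain_cons_cons.1 (by rw [hsplit] at hL; exact hL)).1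
      intro ⟨h1, h2⟩
      exact this ⟨h1.symm, by rw [h2]; simp⟩
    | nil =>
      simp only [List.nil_append] at hsplit hred
      subst hsplit
      cases W₂ with
      | nil =>
        refine ⟨[x], L, [], rfl, by simpa using hWsplit, ?_⟩
        rw [List.cons_append, FreeGroup.reduce.cons, hred]
        rfl
      | cons y t =>
        by_cases hc : x.1 = y.1 ∧ x.2 = !y.2
        · refine ⟨[], x :: L, t, rfl, ?_, ?_⟩
          · rw [invRev_cons, hWsplit]
            have : y = (x.1, !x.2) := by
              obtain ⟨h1, h2⟩ := hc
              ext
              · exact h1.symm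
              · rw [h2]; simp
            simp [this]
          · rw [List.cons_append, FreeGroup.reduce.cons, hred]
            simp [hc]
        · refine ⟨[x], L, y :: t, rfl, hWsplit, ?_⟩
          rw [List.cons_append, FreeGroup.reduce.cons, hred]
          simp [hc]

theorem myprefix {l₁ l₂ l₃ : List (α × Bool)} (h1 : l₁ <+: l₃) (h2 : l₂ <+: l₃)
    (h : l₁.length ≤ l₂.length) : l₁ <+: l₂ := by
  rcases List.prefix_or_prefix_of_prefix h1 h2 with hh | hh
  · exact hh
  · rw [hh.eq_of_length_le h]

theorem mysuffix {l₁ l₂ l₃ : List (α × Bool)} (h1 : l₁ <:+ l₃) (h2 : l₂ <:+ l₃)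
    (h : l₁.length ≤ l₂.length) : l₁ <:+ l₂ := by
  rcases List.suffix_or_suffix_of_suffix h1 h2 with hh | hh
  · exact hh
  · rw [hh.eq_of_length_le h]

theorem invRev_append' (L₁ L₂ : List (α × Bool)) :
    FreeGroup.invRev (L₁ ++ L₂) = FreeGroup.invRev L₂ ++ FreeGroup.invRev L₁ := by
  simp [FreeGroup.invRev]

theorem toWord_mul' (x w : FreeGroup α) :
    (x * w).toWord = FreeGroup.reduce (x.toWord ++ w.toWord) := by
  conv_lhs => rw [← FreeGroup.mk_toWord (x := x), ← FreeGroup.mk_toWord (x := w)]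
  rw [FreeGroup.mul_mk, FreeGroup.toWord_mk]

theorem key {x : FreeGroup α} {A B : List (α × Bool)} {c : α × Bool} {p : ℕ} (hp : 3 ≤ p)
    (hx : x.toWord = A ++ List.replicate p c ++ B) {w : FreeGroup α}
    (hnot : ¬(FreeGroup.invRev B ++ [(c.1, !c.2), (c.1, !c.2)] <+: w.toWord)) :
    A ++ [c, c] <+: (x * w).toWord := by
  have hrep2 : List.replicate p c = [c, c] ++ List.replicate (p - 2) c := by
    have h2 : p = 2 + (p - 2) := by omega
    conv_lhs => rw [h2]
    rw [List.replicate_add]; rfl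
  have hrep2' : List.replicate p c = List.replicate (p - 2) c ++ [c, c] := by
    have h2 : p = (p - 2) + 2 := by omega
    conv_lhs => rw [h2]
    rw [List.replicate_add]; rfl
  obtain ⟨L₁, M, W₂, hsplit, hWsplit, hred⟩ :=
    cancel (L := x.toWord) (W := w.toWord) (red'_toWord x) (red'_toWord w)
  rw [toWord_mul', hred]
  have hlen : L₁.length + M.length = x.toWord.length := by
    rw [hsplit, List.length_append]
  rw [hx] at hsplit hlen
  simp only [List.length_append, List.length_replicate] at hlen
  by_cases hM : M.length ≤ B.length + 1
  · -- enough room: A ++ [c,c] is a prefix of L₁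
    have hACC : A ++ [c, c] <+: A ++ List.replicate p c ++ B := by
      rw [hrep2]
      exact ⟨List.replicate (p - 2) c ++ B, by simp⟩
    have hL₁ : L₁ <+: A ++ List.replicate p c ++ B := ⟨M, hsplit.symm⟩
    have : A ++ [c, c] <+: L₁ := by
      apply myprefix hACC hL₁
      simp only [List.length_append, List.length_cons, List.length_nil]
      omega
    exact this.trans ⟨W₂, rfl⟩
  · -- big cancellation: contradiction with hnot
    exfalso
    apply hnot
    have hMsuf : M <:+ A ++ List.replicate p c ++ B := ⟨L₁, hsplit.symm⟩
    have hccB : [c, c] ++ B <:+ A ++ List.replicate p c ++ B := by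
      refine ⟨A ++ List.replicate (p - 2) c, ?_⟩
      rw [hrep2']; simp
    have hsub : [c, c] ++ B <:+ M := by
      apply mysuffix hccB hMsuf
      simp only [List.length_append, List.length_cons, List.length_nil]
      omega
    obtain ⟨T, hT⟩ := hsub
    rw [hWsplit, ← hT, ← List.append_assoc, invRev_append', invRev_append']
    refine ⟨FreeGroup.invRev T ++ W₂, ?_⟩
    have : FreeGroup.invRev [c, c] = [(c.1, !c.2), (c.1, !c.2)] := by
      simp [FreeGroup.invRev]
    rw [this]; simp

theorem incomp {D D' : List (α × Bool)} {c c' : α × Bool}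
    (hD' : List.Chain' (fun a b => a.1 ≠ b.1) (D' ++ [c']))
    (hne : D.length ≠ D'.length ∨ c ≠ c') :
    ¬ (D ++ [c] ++ [c] <+: D' ++ [c'] ++ [c']) := by
  intro hpre
  set n := D.length with hn
  set n' := D'.length with hn'
  have hlenP : (D ++ [c] ++ [c]).length = n + 2 := by simp [hn]
  have hlenP' : (D' ++ [c'] ++ [c']).length = n' + 2 := by simp [hn']
  have hlen : n + 2 ≤ n' + 2 := by
    rw [← hlenP, ← hlenP']; exact hpre.length_le
  have hE'len : (D' ++ [c']).length = n' + 1 := by simp [hn']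
  have hPn : (D ++ [c] ++ [c])[n]'(by omega) = c := by
    rw [List.getElem_append_left (by simp [hn])]
    exact List.getElem_concat_length (l := D) (a := c) (i := n) hn (by simp [hn])
  have hPn1 : (D ++ [c] ++ [c])[n + 1]'(by omega) = c :=
    List.getElem_concat_length (l := D ++ [c]) (a := c) (i := n+1) (by simp [hn]) (by simp [hn])
  have h1 : (D' ++ [c'] ++ [c'])[n]'(by omega) = c := by
    rw [← hpre.getElem]; exact hPn
  have h2 : (D' ++ [c'] ++ [c'])[n + 1]'(by omega) = c := by
    rw [← hpre.getElem]; exact hPn1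
  rcases lt_or_eq_of_le (by omega : n ≤ n') with hlt | heq
  · -- n < n' : both indices land in the alternating part D' ++ [c']
    have hcha := List.isChain_iff_getElem.1 hD'
    have := hcha n (by simp; omega)
    apply this
    have e1 : (D' ++ [c'] ++ [c'])[n]'(by omega) = (D' ++ [c'])[n]'(by omega) :=
      List.getElem_append_left (by omega)
    have e2 : (D' ++ [c'] ++ [c'])[n+1]'(by omega) = (D' ++ [c'])[n+1]'(by omega) :=
      List.getElem_append_left (by omega)
    rw [← e1, ← e2, h1, h2]
  · -- n = n' : then c = c'
    have hc' : (D' ++ [c'] ++ [c'])[n + 1]'(by omega) = c' :=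
      List.getElem_concat_length (l := D' ++ [c']) (a := c') (i := n+1) (by simp; omega) (by simp; omega)
    rcases hne with hl | hc
    · exact hl heq
    · exact hc (h2.symm.trans hc')

end Generic

abbrev alt : Fin 2 × Bool → Fin 2 × Bool → Prop := fun a b => a.1 ≠ b.1

theorem chain'_alt_invRev {L : List (Fin 2 × Bool)} (hL : List.Chain' alt L) :
    List.Chain' alt (FreeGroup.invRev L) := by
  unfold FreeGroup.invRev
  unfold List.Chain' at hL ⊢
  rw [List.isChain_reverse, List.isChain_map]
  exact hL.imp fun {a b} hab => hab.symm

theorem getLast?_invRev (L : List (Fin 2 × Bool)) :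
    (FreeGroup.invRev L).getLast? = L.head?.map (fun q => (q.1, !q.2)) := by
  simp [FreeGroup.invRev]

theorem altEnd {w : F2} {d0 c0 : Fin 2} (halt : Alternating w) (hend : EndsWith d0 w)
    (hdc : d0 ≠ c0) (s : Bool) :
    List.Chain' alt (w.toWord ++ [(c0, s)]) := by
  apply List.IsChain.append halt (List.isChain_singleton _)
  intro x hx y hy
  have hy' : y = (c0, s) := by simpa using hy.symm
  subst hy'
  rcases hend with hnil | hlast
  · rw [hnil] at hx; simp at hx
  · rw [Option.mem_def] at hx
    rw [hx] at hlast
    simp only [Option.map_some, Option.some.injEq] at hlast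
    simpa [alt, hlast] using hdc

theorem altEndInv {w : F2} {d0 c0 : Fin 2} (halt : Alternating w) (hstart : StartsWith d0 w)
    (hdc : d0 ≠ c0) (s : Bool) :
    List.Chain' alt (FreeGroup.invRev w.toWord ++ [(c0, s)]) := by
  apply List.IsChain.append (chain'_alt_invRev halt) (List.isChain_singleton _)
  intro x hx y hy
  have hy' : y = (c0, s) := by simpa using hy.symm
  subst hy'
  rw [Option.mem_def, getLast?_invRev] at hx
  rcases hstart with hnil | hhead
  · rw [hnil] at hx; simp at hx
  · cases hq : w.toWord.head? with
    | none => rw [hq] at hx; simp at hx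
    | some q =>
      rw [hq] at hx hhead
      simp only [Option.map_some, Option.some.injEq] at hx hhead
      rw [← hx]
      simpa [alt, hhead] using hdc


theorem red'_of_alt {L : List (Fin 2 × Bool)} (hL : List.Chain' alt L) : Red' L :=
  hL.imp fun {a b} hab hc => hab hc.1.symm

theorem red'_marker {D : List (Fin 2 × Bool)} {c : Fin 2 × Bool}
    (hD : List.Chain' alt (D ++ [c])) : Red' ((D ++ [c]) ++ [c]) := by
  apply List.IsChain.append (red'_of_alt hD) (List.isChain_singleton _)
  intro x hx y hy
  have hy' : y = c := by simpa using hy.symm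
  have hx' : x = c := by
    have h2 : c = x := by simpa using hx
    exact h2.symm
  subst hy'; subst hx'
  rintro ⟨-, hc⟩
  simp at hc


theorem toWord_block (a b : F2) (c0 : Fin 2) (p : ℕ) (hp : 0 < p) (d0 : Fin 2) (hdc : d0 ≠ c0)
    (hend : EndsWith d0 a) (hstart : StartsWith d0 b) :
    (a * FreeGroup.of c0 ^ p * b).toWord
      = a.toWord ++ List.replicate p (c0, true) ++ b.toWord := by
  have hmk : a * FreeGroup.of c0 ^ p * b
      = FreeGroup.mk (a.toWord ++ List.replicate p (c0, true) ++ b.toWord) := by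
    conv_lhs => rw [← FreeGroup.mk_toWord (x := a), ← FreeGroup.mk_toWord (x := b),
      ← FreeGroup.mk_toWord (x := FreeGroup.of c0 ^ p)]
    rw [FreeGroup.toWord_of_pow, FreeGroup.mul_mk, FreeGroup.mul_mk]
  rw [hmk, FreeGroup.toWord_mk]
  apply reduce_eq_self
  have hR : Red' (List.replicate p (c0, true)) :=
    List.isChain_replicate_of_rel p (by simp)
  apply List.IsChain.append
  · apply List.IsChain.append (red'_toWord a) hR
    · intro x hx y hy
      obtain ⟨p', rfl⟩ : ∃ p', p = p' + 1 := ⟨p - 1, by omega⟩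
      have hy' : y = (c0, true) := by
        rw [List.replicate_succ] at hy
        simpa using hy.symm
      subst hy'
      rcases hend with hnil | hlast
      · rw [hnil] at hx; simp at hx
      · rw [Option.mem_def] at hx
        rw [hx] at hlast
        simp only [Option.map_some, Option.some.injEq] at hlast
        rintro ⟨h1, -⟩
        exact hdc (by rw [← hlast]; exact h1.symm)
  · exact red'_toWord b
  · intro x hx y hy
    obtain ⟨p', rfl⟩ : ∃ p', p = p' + 1 := ⟨p - 1, by omega⟩
    have hx' : x = (c0, true) := by
      rw [List.replicate_succ', ← List.append_assoc] at hx
      have h2 : (c0, true) = x := by simpa using hx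
      exact h2.symm
    subst hx'
    rcases hstart with hnil | hhead
    · rw [hnil] at hy; simp at hy
    · rw [Option.mem_def] at hy
      rw [hy] at hhead
      simp only [Option.map_some, Option.some.injEq] at hhead
      rintro ⟨h1, -⟩
      exact hdc (by rw [← hhead, h1])

theorem invRev_replicate (p : ℕ) (c0 : Fin 2) (s : Bool) :
    FreeGroup.invRev (List.replicate p (c0, s)) = List.replicate p (c0, !s) := by
  simp [FreeGroup.invRev, List.map_replicate]

theorem toWord_block_inv (a b : F2) (c0 : Fin 2) (p : ℕ) (hp : 0 < p) (d0 : Fin 2)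
    (hdc : d0 ≠ c0) (hend : EndsWith d0 a) (hstart : StartsWith d0 b) :
    ((a * FreeGroup.of c0 ^ p * b)⁻¹).toWord
      = FreeGroup.invRev b.toWord ++ List.replicate p (c0, false) ++ FreeGroup.invRev a.toWord := by
  rw [FreeGroup.toWord_inv, toWord_block a b c0 p hp d0 hdc hend hstart,
    invRev_append', invRev_append', invRev_replicate]
  simp [List.append_assoc]

theorem incomp' {D D' : List (Fin 2 × Bool)} {c c' : Fin 2 × Bool}
    (hD' : List.Chain' alt (D' ++ [c']))
    (hne : D.length ≠ D'.length ∨ c ≠ c') :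
    ¬ (D ++ [c, c] <+: D' ++ [c', c']) := by
  have := incomp (D := D) (D' := D') (c := c) (c' := c') hD' hne
  simpa using this

theorem core {ι : Type} (p : ℕ) (hp : 3 ≤ p) (a : ι → F2)
    (A B : ι → List (Fin 2 × Bool)) (e : ι → Fin 2)
    (hA : ∀ i, List.Chain' alt (A i ++ [(e i, true)]))
    (hB : ∀ i, List.Chain' alt (FreeGroup.invRev (B i) ++ [(e i, false)]))
    (htw : ∀ i, (a i).toWord = A i ++ List.replicate p (e i, true) ++ B i)
    (hlenA : ∀ i j, i ≠ j → (A i).length ≠ (A j).length ∨ e i ≠ e j)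
    (hlenB : ∀ i j, i ≠ j → (B i).length ≠ (B j).length ∨ e i ≠ e j) :
    (∀ i (n : ℤ), n ≠ 0 → a i ^ n ≠ 1) ∧
      (Nontrivial ι → Function.Injective (FreeGroup.lift a)) := by
  set X : ι → Set F2 := fun i => {z | A i ++ [(e i, true), (e i, true)] <+: z.toWord} with hX
  set Y : ι → Set F2 :=
    fun i => {z | FreeGroup.invRev (B i) ++ [(e i, false), (e i, false)] <+: z.toWord} with hY
  have htwinv : ∀ i, ((a i)⁻¹).toWord
      = FreeGroup.invRev (B i) ++ List.replicate p (e i, false) ++ FreeGroup.invRev (A i) := by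
    intro i
    rw [FreeGroup.toWord_inv, htw i, invRev_append', invRev_append', invRev_replicate]
    simp [List.append_assoc]
  have hmoveX : ∀ i z, z ∉ Y i → a i * z ∈ X i := by
    intro i z hz
    have hnot : ¬(FreeGroup.invRev (B i)
        ++ [((e i, true).1, !(e i, true).2), ((e i, true).1, !(e i, true).2)] <+: z.toWord) := by
      simpa [hY] using hz
    exact key hp (htw i) hnot
  have hmoveY : ∀ i z, z ∉ X i → (a i)⁻¹ * z ∈ Y i := by
    intro i z hz
    have hnot : ¬(FreeGroup.invRev (FreeGroup.invRev (A i))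
        ++ [((e i, false).1, !(e i, false).2), ((e i, false).1, !(e i, false).2)]
          <+: z.toWord) := by
      rw [FreeGroup.invRev_invRev]
      simpa [hX] using hz
    exact key hp (htwinv i) hnot
  have hdisjXX : ∀ i j, i ≠ j → Disjoint (X i) (X j) := by
    intro i j hij
    rw [Set.disjoint_left]
    intro z hzi hzj
    rcases List.prefix_or_prefix_of_prefix hzi hzj with hh | hh
    · exact incomp' (hA j) (by
        rcases hlenA i j hij with hl | hc
        · exact Or.inl hl
        · exact Or.inr (by simpa using hc)) hh
    · exact incomp' (hA i) (by
        rcases hlenA j i hij.symm with hl | hc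
        · exact Or.inl hl
        · exact Or.inr (by simpa using hc)) hh
  have hdisjYY : ∀ i j, i ≠ j → Disjoint (Y i) (Y j) := by
    intro i j hij
    rw [Set.disjoint_left]
    intro z hzi hzj
    rcases List.prefix_or_prefix_of_prefix hzi hzj with hh | hh
    · exact incomp' (hB j) (by
        rcases hlenB i j hij with hl | hc
        · exact Or.inl (by simpa using hl)
        · exact Or.inr (by simpa using hc)) hh
    · exact incomp' (hB i) (by
        rcases hlenB j i hij.symm with hl | hc
        · exact Or.inl (by simpa using hl)
        · exact Or.inr (by simpa using hc)) hh
  have hdisjXY : ∀ i j, Disjoint (X i) (Y j) := by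
    intro i j
    rw [Set.disjoint_left]
    intro z hzi hzj
    rcases List.prefix_or_prefix_of_prefix hzi hzj with hh | hh
    · exact incomp' (hB j) (Or.inr (by simp)) hh
    · exact incomp' (hA i) (Or.inr (by simp)) hh
  have hXne1 : ∀ i z, z ∈ X i → z ≠ 1 := by
    intro i z hz h1
    subst h1
    have h2 : A i ++ [(e i, true), (e i, true)] <+: FreeGroup.toWord (1 : F2) := hz
    rw [FreeGroup.toWord_one] at h2
    have := List.prefix_nil.1 h2
    simp at this
  have hYne1 : ∀ i z, z ∈ Y i → z ≠ 1 := by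
    intro i z hz h1
    subst h1
    have h2 : FreeGroup.invRev (B i) ++ [(e i, false), (e i, false)]
        <+: FreeGroup.toWord (1 : F2) := hz
    rw [FreeGroup.toWord_one] at h2
    have := List.prefix_nil.1 h2
    simp at this
  have hone_notY : ∀ i, (1 : F2) ∉ Y i := fun i hz => hYne1 i 1 hz rfl
  have hone_notX : ∀ i, (1 : F2) ∉ X i := fun i hz => hXne1 i 1 hz rfl
  have hposX : ∀ i (m : ℕ), a i ^ (m + 1) ∈ X i := by
    intro i m
    induction m with
    | zero => simpa using hmoveX i 1 (hone_notY i)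
    | succ m ih =>
      have : a i ^ (m + 1 + 1) = a i * a i ^ (m + 1) := by
        rw [← pow_succ']
      rw [this]
      exact hmoveX i _ (fun hmem => Set.disjoint_left.1 (hdisjXY i i) ih hmem)
  constructor
  · intro i n hn h1
    rcases n with k | m
    · have hk : k ≠ 0 := by simpa using hn
      obtain ⟨m, rfl⟩ : ∃ m, k = m + 1 := ⟨k - 1, by omega⟩
      rw [show Int.ofNat (m + 1) = ((m + 1 : ℕ) : ℤ) from rfl, zpow_natCast] at h1
      exact hXne1 i _ (hposX i m) h1
    · rw [zpow_negSucc, inv_eq_one] at h1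
      exact hXne1 i _ (hposX i m) h1
  · intro ht
    haveI := ht
    apply FreeGroup.injective_lift_of_ping_pong a X Y
    · intro i
      refine ⟨FreeGroup.mk (A i ++ [(e i, true), (e i, true)]), ?_⟩
      have hred : Red' (A i ++ [(e i, true), (e i, true)]) := by
        have := red'_marker (hA i)
        simpa using this
      show A i ++ [(e i, true), (e i, true)] <+: _
      rw [FreeGroup.toWord_mk, reduce_eq_self hred]
    · exact fun i j hij => hdisjXX i j hij
    · exact fun i j hij => hdisjYY i j hij
    · exact hdisjXY
    · intro i
      rintro x ⟨z, hz, rfl⟩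
      exact hmoveX i z hz
    · intro i
      rintro x ⟨z, hz, rfl⟩
      exact hmoveY i z hz


theorem stmt_1 (p : ℕ) (hp : 3 ≤ p) (n₁ n₂ : ℕ)
    (v v' : Fin n₁ → F2) (u u' : Fin n₂ → F2)
    (hv : ∀ i, Alternating (v i)) (hv' : ∀ i, Alternating (v' i))
    (hu : ∀ i, Alternating (u i)) (hu' : ∀ i, Alternating (u' i))
    (hvend : ∀ i, EndsWith 1 (v i)) (hv'start : ∀ i, StartsWith 1 (v' i))
    (huend : ∀ i, EndsWith 0 (u i)) (hu'start : ∀ i, StartsWith 0 (u' i))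
    (hlv : StrictMono fun i => (v i).toWord.length)
    (hlv' : StrictMono fun i => (v' i).toWord.length)
    (hlu : StrictMono fun i => (u i).toWord.length)
    (hlu' : StrictMono fun i => (u' i).toWord.length) :
    ∀ w : FreeGroup (Fin n₁ ⊕ Fin n₂), w ≠ 1 →
      FreeGroup.lift
        (Sum.elim (fun i => v i * g ^ p * v' i) (fun i => u i * h ^ p * u' i)) w ≠ 1 := by
  obtain ⟨hzpow, hinj⟩ := core p hp
    (Sum.elim (fun i => v i * g ^ p * v' i) (fun i => u i * h ^ p * u' i))
    (Sum.elim (fun i => (v i).toWord) (fun j => (u j).toWord))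
    (Sum.elim (fun i => (v' i).toWord) (fun j => (u' j).toWord))
    (Sum.elim (fun _ => (0 : Fin 2)) (fun _ => (1 : Fin 2)))
    (by
      rintro (i | j)
      · exact altEnd (hv i) (hvend i) (by simp) true
      · exact altEnd (hu j) (huend j) (by simp) true)
    (by
      rintro (i | j)
      · exact altEndInv (hv' i) (hv'start i) (by simp) false
      · exact altEndInv (hu' j) (hu'start j) (by simp) false)
    (by
      rintro (i | j)
      · exact toWord_block (v i) (v' i) 0 p (by omega) 1 (by simp) (hvend i) (hv'start i)
      · exact toWord_block (u j) (u' j) 1 p (by omega) 0 (by simp) (huend j) (hu'start j))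
    (by
      rintro (i | i) (j | j) hij
      · exact Or.inl fun hcon => hij (congrArg Sum.inl (hlv.injective hcon))
      · exact Or.inr (by simp)
      · exact Or.inr (by simp)
      · exact Or.inl fun hcon => hij (congrArg Sum.inr (hlu.injective hcon)))
    (by
      rintro (i | i) (j | j) hij
      · exact Or.inl fun hcon => hij (congrArg Sum.inl (hlv'.injective hcon))
      · exact Or.inr (by simp)
      · exact Or.inr (by simp)
      · exact Or.inl fun hcon => hij (congrArg Sum.inr (hlu'.injective hcon)))
  intro w hw
  by_cases hnt : Nontrivial (Fin n₁ ⊕ Fin n₂)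
  · intro hcon
    exact hw (hinj hnt (by rw [hcon, map_one]))
  · haveI hss : Subsingleton (Fin n₁ ⊕ Fin n₂) := not_nontrivial_iff_subsingleton.mp hnt
    rcases isEmpty_or_nonempty (Fin n₁ ⊕ Fin n₂) with he | hne
    · exfalso
      apply hw
      have hnil : w.toWord = [] := by
        cases hW : w.toWord with
        | nil => rfl
        | cons x t => exact (he.false x.1).elim
      exact FreeGroup.toWord_eq_nil_iff.1 hnil
    · obtain ⟨i0⟩ := hne
      haveI : Unique (Fin n₁ ⊕ Fin n₂) := uniqueOfSubsingleton i0
      set E := FreeGroup.freeGroupCongr (Equiv.ofUnique (Fin n₁ ⊕ Fin n₂) Unit) with hE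
      set n := FreeGroup.freeGroupUnitEquivInt (E w) with hn
      have hw' : E w = FreeGroup.of () ^ n :=
        (FreeGroup.freeGroupUnitEquivInt.symm_apply_apply (E w)).symm
      have hn0 : n ≠ 0 := by
        intro h0
        apply hw
        have h1 : E w = 1 := by rw [hw', h0, zpow_zero]
        have h2 := E.injective (h1.trans (map_one E).symm)
        simpa using h2
      have hwform : w = FreeGroup.of i0 ^ n := by
        apply E.injective
        rw [hw', map_zpow]
        rw [hE]
        simp [FreeGroup.freeGroupCongr_apply, FreeGroup.map.of]
      intro hcon
      apply hzpow i0 n hn0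
      rw [hwform, map_zpow, FreeGroup.lift_apply_of] at hcon
      exact hcon


end Stmt1
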